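/- Let p be a prime, let k ∈ ℤ_p be nonzero, and assume S = ℤ_p[z]/(z² − k) is the maximal order in K = ℚ_p[z]/(z² − k), i.e., S is identified with the integral closure of ℤ_p in K. Let f and f′ be integer-matrix binary cubic forms with coefficients in ℤ_p, both of reduced discriminant 4k, and suppose f′ = γ·f for some γ ∈ SL₂(ℚ_p). Then f′ = γ′·f for some γ′ ∈ SL₂(ℤ_p). In other words, every SL₂(ℚ_p)-orbit of discriminant 4k contains at most one SL₂(ℤ_p)-orbit of forms with ℤ_p-coefficients. -/

import Mathlib

/-!
STATEMENT 8: Let p be a prime, k ∈ ℤ_p nonzero, and assume S = ℤ_p[z]/(z² − k) is the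
maximal order in K = ℚ_p[z]/(z² − k) (the natural map S → K identifies S with the
integral closure of ℤ_p in K).  If f and f′ are integer-matrix binary cubic forms with
ℤ_p-coefficients, both of reduced discriminant 4k, and f′ = γ·f for some γ ∈ SL₂(ℚ_p),
then f′ = γ′·f for some γ′ ∈ SL₂(ℤ_p): every SL₂(ℚ_p)-orbit of discriminant 4k
contains at most one SL₂(ℤ_p)-orbit of forms with ℤ_p-coefficients.
-/

open Matrix MatrixGroups

/-- An (integer-matrix) binary cubic form over `R`: the quadruple `(a,b,c,d)` stands for
`f(x,y) = a·x³ + 3b·x²y + 3c·xy² + d·y³`. -/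
abbrev BCF (R : Type*) := R × R × R × R

/-- The reduced discriminant `disc(f) = a²d² − 3b²c² − 6abcd + 4ac³ + 4b³d` of the
integer-matrix binary cubic form `(a,b,c,d)`. -/
def bcfDisc {R : Type*} [CommRing R] (f : BCF R) : R :=
  f.1 ^ 2 * f.2.2.2 ^ 2 - 3 * f.2.1 ^ 2 * f.2.2.1 ^ 2
    - 6 * f.1 * f.2.1 * f.2.2.1 * f.2.2.2 + 4 * f.1 * f.2.2.1 ^ 3 + 4 * f.2.1 ^ 3 * f.2.2.2

/-- The value `f(x,y)` of the integer-matrix binary cubic form `f = (a,b,c,d)`. -/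
def bcfVal {R : Type*} [CommRing R] (f : BCF R) (x y : R) : R :=
  f.1 * x ^ 3 + 3 * f.2.1 * x ^ 2 * y + 3 * f.2.2.1 * x * y ^ 2 + f.2.2.2 * y ^ 3

/-- The action of a 2×2 matrix `γ = ((p,q),(r,s))` on integer-matrix binary cubic forms
by linear change of variable, `(γ·f)(x,y) = f(px+qy, rx+sy)`, written in coordinates. -/
def bcfAct {R : Type*} [CommRing R] (γ : Matrix (Fin 2) (Fin 2) R) (f : BCF R) : BCF R :=
  (f.1 * γ 0 0 ^ 3 + 3 * f.2.1 * γ 0 0 ^ 2 * γ 1 0 + 3 * f.2.2.1 * γ 0 0 * γ 1 0 ^ 2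
     + f.2.2.2 * γ 1 0 ^ 3,
   f.1 * γ 0 0 ^ 2 * γ 0 1 + f.2.1 * (γ 0 0 ^ 2 * γ 1 1 + 2 * γ 0 0 * γ 0 1 * γ 1 0)
     + f.2.2.1 * (2 * γ 0 0 * γ 1 0 * γ 1 1 + γ 0 1 * γ 1 0 ^ 2) + f.2.2.2 * γ 1 0 ^ 2 * γ 1 1,
   f.1 * γ 0 0 * γ 0 1 ^ 2 + f.2.1 * (2 * γ 0 0 * γ 0 1 * γ 1 1 + γ 0 1 ^ 2 * γ 1 0)
     + f.2.2.1 * (γ 0 0 * γ 1 1 ^ 2 + 2 * γ 0 1 * γ 1 0 * γ 1 1) + f.2.2.2 * γ 1 0 * γ 1 1 ^ 2,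
   f.1 * γ 0 1 ^ 3 + 3 * f.2.1 * γ 0 1 ^ 2 * γ 1 1 + 3 * f.2.2.1 * γ 0 1 * γ 1 1 ^ 2
     + f.2.2.2 * γ 1 1 ^ 3)

/-- The action is by substitution: `(γ·f)(x,y) = f(px+qy, rx+sy)`. -/
theorem bcfAct_val {R : Type*} [CommRing R] (γ : Matrix (Fin 2) (Fin 2) R) (f : BCF R)
    (x y : R) : bcfVal (bcfAct γ f) x y
      = bcfVal f (γ 0 0 * x + γ 0 1 * y) (γ 1 0 * x + γ 1 1 * y) := by
  simp only [bcfAct, bcfVal]; ring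

theorem bcfAct_one {R : Type*} [CommRing R] (f : BCF R) : bcfAct (1 : Matrix (Fin 2) (Fin 2) R) f = f := by
  obtain ⟨a, b, c, d⟩ := f
  simp [bcfAct, Matrix.one_apply]

theorem bcfAct_mul {R : Type*} [CommRing R] (g h : Matrix (Fin 2) (Fin 2) R) (f : BCF R) :
    bcfAct (g * h) f = bcfAct h (bcfAct g f) := by
  obtain ⟨a, b, c, d⟩ := f
  simp only [bcfAct, Matrix.mul_apply, Fin.sum_univ_two, Prod.mk.injEq]
  refine ⟨by ring, by ring, by ring, by ring⟩

noncomputable section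

open Polynomial

variable (p : ℕ) [Fact p.Prime] (k : ℤ_[p])

/-- The order `S = ℤ_p[z]/(z² − k)`. -/
abbrev Sord := AdjoinRoot (Polynomial.X ^ 2 - Polynomial.C k : Polynomial ℤ_[p])

/-- The quadratic étale algebra `K = ℚ_p[z]/(z² − k)`. -/
abbrev Kalg := AdjoinRoot (Polynomial.X ^ 2 - Polynomial.C (k : ℚ_[p]) : Polynomial ℚ_[p])

/-- The natural map `S → K`, sending `z` to `z` and acting on constants via the
inclusion `ℤ_p → ℚ_p`. -/
def iota : Sord p k →+* Kalg p k :=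
  AdjoinRoot.lift (algebraMap ℤ_[p] (Kalg p k)) (AdjoinRoot.root _) (by
    have h := AdjoinRoot.eval₂_root (X ^ 2 - C (k : ℚ_[p]) : Polynomial ℚ_[p])
    simp only [eval₂_sub, eval₂_pow, eval₂_X, eval₂_C] at h ⊢
    rw [IsScalarTower.algebraMap_apply ℤ_[p] ℚ_[p], AdjoinRoot.algebraMap_eq]
    exact h)

/-- Coefficientwise inclusion of binary cubic forms over `ℤ_p` into forms over `ℚ_p`. -/
def mapC : BCF ℤ_[p] → BCF ℚ_[p] := fun f =>
  ((f.1 : ℚ_[p]), (f.2.1 : ℚ_[p]), (f.2.2.1 : ℚ_[p]), (f.2.2.2 : ℚ_[p]))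

theorem bcfDisc_act' {R : Type*} [CommRing R] (γ : Matrix (Fin 2) (Fin 2) R) (f : BCF R) :
    bcfDisc (bcfAct γ f) = (γ 0 0 * γ 1 1 - γ 0 1 * γ 1 0) ^ 6 * bcfDisc f := by
  obtain ⟨a, b, c, d⟩ := f
  simp only [bcfAct, bcfDisc]
  ring

theorem bcfDisc_act_sl {R : Type*} [CommRing R] (γ : Matrix (Fin 2) (Fin 2) R)
    (hγ : γ.det = 1) (f : BCF R) : bcfDisc (bcfAct γ f) = bcfDisc f := by
  rw [Matrix.det_fin_two] at hγ
  rw [bcfDisc_act', hγ, one_pow, one_mul]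

theorem coeRH_eq (x : ℤ_[p]) : (PadicInt.Coe.ringHom x : ℚ_[p]) = (x : ℚ_[p]) := rfl

theorem mapC_act (γ : Matrix (Fin 2) (Fin 2) ℤ_[p]) (f : BCF ℤ_[p]) :
    mapC p (bcfAct γ f) = bcfAct (γ.map (PadicInt.Coe.ringHom)) (mapC p f) := by
  obtain ⟨a, b, c, d⟩ := f
  simp only [mapC, bcfAct, Matrix.map_apply, coeRH_eq, Prod.mk.injEq]
  have h3 : ((3 : ℤ_[p]) : ℚ_[p]) = 3 := by norm_cast
  have h2 : ((2 : ℤ_[p]) : ℚ_[p]) = 2 := by norm_cast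
  refine ⟨?_, ?_, ?_, ?_⟩ <;> · push_cast [h3, h2]; ring

theorem mapC_inj : Function.Injective (mapC p) := by
  rintro ⟨a, b, c, d⟩ ⟨a', b', c', d'⟩ h
  simp only [mapC, Prod.mk.injEq] at h
  obtain ⟨h1, h2, h3, h4⟩ := h
  exact Prod.ext (Subtype.coe_injective h1) (Prod.ext (Subtype.coe_injective h2)
    (Prod.ext (Subtype.coe_injective h3) (Subtype.coe_injective h4)))
/-- `M = A · diag(s⁻¹, s) · B` with `A, B` integral of determinant 1 and `s ∈ ℤ_p` nonzero. -/
def HasDec (M : Matrix (Fin 2) (Fin 2) ℚ_[p]) : Prop :=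
  ∃ (A B : Matrix (Fin 2) (Fin 2) ℤ_[p]) (s : ℤ_[p]), A.det = 1 ∧ B.det = 1 ∧ s ≠ 0 ∧
    A.map PadicInt.Coe.ringHom * Matrix.diagonal ![((s : ℚ_[p]))⁻¹, (s : ℚ_[p])]
      * B.map PadicInt.Coe.ringHom = M

theorem dec_helper (M : Matrix (Fin 2) (Fin 2) ℚ_[p]) (hdet : M.det = 1)
    (h01 : ‖M 0 1‖ ≤ ‖M 0 0‖) (h10 : ‖M 1 0‖ ≤ ‖M 0 0‖) (h11 : ‖M 1 1‖ ≤ ‖M 0 0‖) :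
    HasDec p M := by
  have hd2 : M 0 0 * M 1 1 - M 0 1 * M 1 0 = 1 := by rw [← Matrix.det_fin_two]; exact hdet
  have h1 : (1 : ℝ) ≤ ‖M 0 0‖ := by
    by_contra hlt
    push_neg at hlt
    have e1 : ‖M 0 0 * M 1 1‖ < 1 := by
      rw [norm_mul]
      nlinarith [norm_nonneg (M 0 0), norm_nonneg (M 1 1)]
    have e2 : ‖M 0 1 * M 1 0‖ < 1 := by
      rw [norm_mul]
      nlinarith [norm_nonneg (M 0 1), norm_nonneg (M 1 0)]
    have e3 : ‖M 0 0 * M 1 1 - M 0 1 * M 1 0‖ < 1 := by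
      have := Padic.nonarchimedean (M 0 0 * M 1 1) (-(M 0 1 * M 1 0))
      rw [norm_neg] at this
      rw [sub_eq_add_neg]
      exact lt_of_le_of_lt this (max_lt e1 e2)
    rw [hd2, norm_one] at e3
    exact lt_irrefl _ e3
  have h0 : M 0 0 ≠ 0 := by
    intro h
    rw [h, norm_zero] at h1
    linarith
  have hpos : (0 : ℝ) < ‖M 0 0‖ := lt_of_lt_of_le one_pos h1
  set s : ℤ_[p] := ⟨(M 0 0)⁻¹, by rw [norm_inv]; exact inv_le_one_of_one_le₀ h1⟩ with hs
  set l : ℤ_[p] := ⟨M 1 0 / M 0 0, by rw [norm_div]; exact (div_le_one hpos).2 h10⟩ with hl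
  set r : ℤ_[p] := ⟨M 0 1 / M 0 0, by rw [norm_div]; exact (div_le_one hpos).2 h01⟩ with hr
  refine ⟨!![1, 0; l, 1], !![1, r; 0, 1], s, ?_, ?_, ?_, ?_⟩
  · rw [Matrix.det_fin_two_of]; ring
  · rw [Matrix.det_fin_two_of]; ring
  · intro h
    exact inv_ne_zero h0 (congrArg Subtype.val h)
  · have hA : (!![1, 0; l, 1]).map PadicInt.Coe.ringHom = !![1, 0; (l : ℚ_[p]), 1] := by
      ext i j
      fin_cases i <;> fin_cases j <;> simp [coeRH_eq]
    have hB : (!![1, r; 0, 1]).map PadicInt.Coe.ringHom = !![1, (r : ℚ_[p]); 0, 1] := by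
      ext i j
      fin_cases i <;> fin_cases j <;> simp [coeRH_eq]
    have hsv : ((s : ℚ_[p])) = (M 0 0)⁻¹ := rfl
    have hlv : ((l : ℚ_[p])) = M 1 0 / M 0 0 := rfl
    have hrv : ((r : ℚ_[p])) = M 0 1 / M 0 0 := rfl
    have hD : Matrix.diagonal ![((s : ℚ_[p]))⁻¹, (s : ℚ_[p])] = !![M 0 0, 0; 0, (M 0 0)⁻¹] := by
      ext i j
      fin_cases i <;> fin_cases j <;>
        simp [Matrix.diagonal_apply, hsv, inv_inv]
    rw [hA, hB, hD, Matrix.mul_fin_two, Matrix.mul_fin_two]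
    ext i j
    fin_cases i <;> fin_cases j <;>
      simp only [hlv, hrv, Matrix.cons_val', Matrix.cons_val_zero, Matrix.cons_val_one,
        Matrix.head_cons, Matrix.empty_val', Matrix.cons_val_fin_one, Matrix.head_fin_const, Fin.zero_eta, Fin.mk_one, Matrix.of_apply] <;>
      field_simp
    · ring
    · ring
    · ring
    linear_combination -hd2
theorem dec_of_mul (P Q : Matrix (Fin 2) (Fin 2) ℤ_[p]) (hP : P.det = 1) (hQ : Q.det = 1)
    (M : Matrix (Fin 2) (Fin 2) ℚ_[p])
    (h : HasDec p (P.map PadicInt.Coe.ringHom * M * Q.map PadicInt.Coe.ringHom)) :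
    HasDec p M := by
  obtain ⟨A, B, s, hA, hB, hs, hEq⟩ := h
  have card2 : Fintype.card (Fin 2) = 2 := by simp
  refine ⟨P.adjugate * A, B * Q.adjugate, s, ?_, ?_, hs, ?_⟩
  · rw [Matrix.det_mul, Matrix.det_adjugate, hP, hA, card2]; norm_num
  · rw [Matrix.det_mul, Matrix.det_adjugate, hQ, hB, card2]; norm_num
  · have hPP : (P.adjugate).map PadicInt.Coe.ringHom * P.map PadicInt.Coe.ringHom = 1 := by
      rw [← Matrix.map_mul, Matrix.adjugate_mul, hP, one_smul,
        Matrix.map_one _ (map_zero _) (map_one _)]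
    have hQQ : Q.map PadicInt.Coe.ringHom * (Q.adjugate).map PadicInt.Coe.ringHom = 1 := by
      rw [← Matrix.map_mul, Matrix.mul_adjugate, hQ, one_smul,
        Matrix.map_one _ (map_zero _) (map_one _)]
    rw [Matrix.map_mul, Matrix.map_mul]
    simp only [mul_assoc] at hEq ⊢
    rw [← mul_assoc (Matrix.diagonal ![((s : ℚ_[p]))⁻¹, (s : ℚ_[p])]),
      ← mul_assoc (A.map PadicInt.Coe.ringHom), hEq]
    simp only [mul_assoc]
    rw [hQQ, mul_one, ← mul_assoc, hPP, one_mul]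

theorem dec_all (M : Matrix (Fin 2) (Fin 2) ℚ_[p]) (hdet : M.det = 1) : HasDec p M := by
  obtain ⟨q, -, hq⟩ := Finset.exists_max_image
    (Finset.univ ×ˢ Finset.univ : Finset (Fin 2 × Fin 2)) (fun q => ‖M q.1 q.2‖)
    ⟨(0, 0), by simp⟩
  have hm : ∀ i j : Fin 2, ‖M i j‖ ≤ ‖M q.1 q.2‖ := fun i j => hq (i, j) (by simp)
  have hd2 : M 0 0 * M 1 1 - M 0 1 * M 1 0 = 1 := by rw [← Matrix.det_fin_two]; exact hdet
  obtain ⟨i, j⟩ := q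
  have hW : (!![0, -1; 1, 0] : Matrix (Fin 2) (Fin 2) ℤ_[p]).det = 1 := by
    rw [Matrix.det_fin_two_of]; ring
  have hWm : (!![0, -1; 1, 0] : Matrix (Fin 2) (Fin 2) ℤ_[p]).map PadicInt.Coe.ringHom
      = !![0, -1; 1, 0] := by
    ext i j
    fin_cases i <;> fin_cases j <;> simp [coeRH_eq]
  have h1 : (1 : Matrix (Fin 2) (Fin 2) ℤ_[p]).map PadicInt.Coe.ringHom = 1 :=
    Matrix.map_one _ (map_zero _) (map_one _)
  fin_cases i <;> fin_cases j
  · exact dec_helper p M hdet (by simpa using hm 0 1) (by simpa using hm 1 0)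
      (by simpa using hm 1 1)
  · -- max at (0,1): multiply by W on the right
    have hmx : ∀ a b : Fin 2, ‖M a b‖ ≤ ‖M 0 1‖ := by simpa using hm
    refine dec_of_mul p 1 !![0, -1; 1, 0] Matrix.det_one hW M ?_
    have hE : (1 : Matrix (Fin 2) (Fin 2) ℤ_[p]).map PadicInt.Coe.ringHom * M
        * (!![0, -1; 1, 0] : Matrix (Fin 2) (Fin 2) ℤ_[p]).map PadicInt.Coe.ringHom
        = !![M 0 1, -(M 0 0); M 1 1, -(M 1 0)] := by
      rw [h1, one_mul, hWm]
      ext a b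
      fin_cases a <;> fin_cases b <;>
        simp [Matrix.mul_apply, Matrix.vecMul, dotProduct, Fin.sum_univ_two]
    rw [hE]
    refine dec_helper p _ ?_ ?_ ?_ ?_
    · rw [Matrix.det_fin_two_of]; linear_combination hd2
    · simpa using hmx 0 0
    · simpa using hmx 1 1
    · simpa using hmx 1 0
  · -- max at (1,0): multiply by W on the left
    have hmx : ∀ a b : Fin 2, ‖M a b‖ ≤ ‖M 1 0‖ := by simpa using hm
    refine dec_of_mul p !![0, -1; 1, 0] 1 hW Matrix.det_one M ?_
    have hE : (!![0, -1; 1, 0] : Matrix (Fin 2) (Fin 2) ℤ_[p]).map PadicInt.Coe.ringHom * M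
        * (1 : Matrix (Fin 2) (Fin 2) ℤ_[p]).map PadicInt.Coe.ringHom
        = !![-(M 1 0), -(M 1 1); M 0 0, M 0 1] := by
      rw [h1, mul_one, hWm]
      ext a b
      fin_cases a <;> fin_cases b <;>
        simp [Matrix.mul_apply, Matrix.vecMul, dotProduct, Fin.sum_univ_two]
    rw [hE]
    refine dec_helper p _ ?_ ?_ ?_ ?_
    · rw [Matrix.det_fin_two_of]; linear_combination hd2
    · simpa using hmx 1 1
    · simpa using hmx 0 0
    · simpa using hmx 0 1
  · -- max at (1,1): multiply by W on both sides
    have hmx : ∀ a b : Fin 2, ‖M a b‖ ≤ ‖M 1 1‖ := by simpa using hm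
    refine dec_of_mul p !![0, -1; 1, 0] !![0, -1; 1, 0] hW hW M ?_
    have hE : (!![0, -1; 1, 0] : Matrix (Fin 2) (Fin 2) ℤ_[p]).map PadicInt.Coe.ringHom * M
        * (!![0, -1; 1, 0] : Matrix (Fin 2) (Fin 2) ℤ_[p]).map PadicInt.Coe.ringHom
        = !![-(M 1 1), M 1 0; M 0 1, -(M 0 0)] := by
      rw [hWm]
      ext a b
      fin_cases a <;> fin_cases b <;>
        simp [Matrix.mul_apply, Matrix.vecMul, dotProduct, Fin.sum_univ_two]
    rw [hE]
    refine dec_helper p _ ?_ ?_ ?_ ?_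
    · rw [Matrix.det_fin_two_of]; linear_combination hd2
    · simpa using hmx 1 0
    · simpa using hmx 0 1
    · simpa using hmx 0 0
theorem lin_of_deg_lt_two {R : Type*} [CommRing R] (r : R[X]) (h : r.degree < 2) :
    r = C (r.coeff 1) * X + C (r.coeff 0) := by
  by_cases h0 : r = 0
  · simp [h0]
  · exact eq_X_add_C_of_natDegree_le_one
      (Nat.lt_succ_iff.mp ((natDegree_lt_iff_degree_lt h0).mpr h))

theorem tower_map (z : ℤ_[p]) :
    algebraMap ℤ_[p] (Kalg p k) z = algebraMap ℚ_[p] (Kalg p k) (z : ℚ_[p]) := by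
  rw [IsScalarTower.algebraMap_apply ℤ_[p] ℚ_[p] (Kalg p k)]; rfl

/-- Every integral element of `K` is of the shape `a + b θ` with `a, b ∈ ℤ_p`. -/
theorem integral_form (hmax : (iota p k).range = (integralClosure ℤ_[p] (Kalg p k)).toSubring)
    (w : Kalg p k) (hw : IsIntegral ℤ_[p] w) :
    ∃ r0 r1 : ℤ_[p], w = algebraMap ℚ_[p] (Kalg p k) (r0 : ℚ_[p])
      + algebraMap ℚ_[p] (Kalg p k) (r1 : ℚ_[p]) * AdjoinRoot.root _ := by
  have hw' : w ∈ (iota p k).range := by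
    rw [hmax, Subalgebra.mem_toSubring]
    exact hw
  obtain ⟨s, hs⟩ := hw'
  obtain ⟨q, rfl⟩ := AdjoinRoot.mk_surjective s
  have hmon : (X ^ 2 - C k).Monic := by monicity!
  have hdeg : (q %ₘ (X ^ 2 - C k)).degree < 2 := by
    have h := Polynomial.degree_modByMonic_lt q hmon
    rwa [Polynomial.degree_X_pow_sub_C (by norm_num) k] at h
  have hmk : AdjoinRoot.mk (X ^ 2 - C k) (q %ₘ (X ^ 2 - C k)) = AdjoinRoot.mk (X ^ 2 - C k) q := by
    rw [AdjoinRoot.mk_eq_mk]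
    exact ⟨-(q /ₘ (X ^ 2 - C k)), by
      rw [Polynomial.modByMonic_eq_sub_mul_div q (X ^ 2 - C k)]; ring⟩
  refine ⟨(q %ₘ (X ^ 2 - C k)).coeff 0, (q %ₘ (X ^ 2 - C k)).coeff 1, ?_⟩
  rw [← hs, ← hmk]
  conv_lhs => rw [lin_of_deg_lt_two _ hdeg]
  rw [iota, AdjoinRoot.lift_mk]
  simp only [eval₂_add, eval₂_mul, eval₂_C, eval₂_X]
  rw [← tower_map, ← tower_map]
  ring

/-- The second coordinate of an integral element of `K` lies in `ℤ_p`. -/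
theorem coeff_le_one (hmax : (iota p k).range = (integralClosure ℤ_[p] (Kalg p k)).toSubring)
    (x y : ℚ_[p])
    (hw : IsIntegral ℤ_[p] (algebraMap ℚ_[p] (Kalg p k) x
      + algebraMap ℚ_[p] (Kalg p k) y * AdjoinRoot.root _)) : ‖y‖ ≤ 1 := by
  obtain ⟨r0, r1, heq⟩ := integral_form p k hmax _ hw
  have hz' : AdjoinRoot.mk (X ^ 2 - C (k : ℚ_[p])) (C (y - (r1 : ℚ_[p])) * X + C (x - (r0 : ℚ_[p]))) = 0 := by
    rw [map_add, _root_.map_mul, AdjoinRoot.mk_X]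
    have hC : ∀ z : ℚ_[p], AdjoinRoot.mk (X ^ 2 - C (k : ℚ_[p])) (C z)
        = algebraMap ℚ_[p] (Kalg p k) z := fun z => by rw [AdjoinRoot.algebraMap_eq]; rfl
    rw [hC, hC, map_sub, map_sub]
    linear_combination heq
  rw [AdjoinRoot.mk_eq_zero] at hz'
  have hpoly : (C (y - (r1 : ℚ_[p])) * X + C (x - (r0 : ℚ_[p]))) = 0 := by
    by_contra hne0
    have h1 := Polynomial.degree_le_of_dvd hz' hne0
    rw [Polynomial.degree_X_pow_sub_C (by norm_num) (k : ℚ_[p])] at h1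
    have h2 := Polynomial.degree_linear_le (a := y - (r1 : ℚ_[p])) (b := x - (r0 : ℚ_[p]))
    have h3 : (2 : WithBot ℕ) ≤ 1 := le_trans h1 h2
    exact absurd h3 (by decide)
  have hy1 : y - (r1 : ℚ_[p]) = 0 := by
    have hc := congrArg (fun P : ℚ_[p][X] => P.coeff 1) hpoly
    simpa using hc
  rw [sub_eq_zero] at hy1
  rw [hy1]
  exact r1.2
theorem root_sq : (AdjoinRoot.root (X ^ 2 - C (k : ℚ_[p]))) ^ 2
    = algebraMap ℚ_[p] (Kalg p k) (k : ℚ_[p]) := by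
  have h := AdjoinRoot.eval₂_root (X ^ 2 - C (k : ℚ_[p]))
  simp only [eval₂_sub, eval₂_pow, eval₂_X, eval₂_C] at h
  rw [sub_eq_zero] at h
  rw [h, AdjoinRoot.algebraMap_eq]

theorem not_max_of_sq_dvd (hmax : (iota p k).range = (integralClosure ℤ_[p] (Kalg p k)).toSubring)
    (hdvd : (p : ℤ_[p]) ^ 2 ∣ k) : False := by
  obtain ⟨k0, hk0⟩ := hdvd
  have hp0 : (p : ℚ_[p]) ≠ 0 := Nat.cast_ne_zero.mpr (Fact.out : p.Prime).ne_zero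
  have hw : IsIntegral ℤ_[p] (algebraMap ℚ_[p] (Kalg p k) 0
      + algebraMap ℚ_[p] (Kalg p k) ((p : ℚ_[p]))⁻¹ * AdjoinRoot.root _) := by
    refine ⟨X ^ 2 - C k0, by monicity!, ?_⟩
    simp only [eval₂_sub, eval₂_pow, eval₂_X, eval₂_C]
    rw [map_zero, zero_add, mul_pow, root_sq, tower_map, ← map_pow, ← _root_.map_mul, ← map_sub]
    rw [show ((p : ℚ_[p])⁻¹) ^ 2 * (k : ℚ_[p]) - (k0 : ℚ_[p]) = 0 from ?_, map_zero]
    have hc : (k : ℚ_[p]) = (p : ℚ_[p]) ^ 2 * (k0 : ℚ_[p]) := by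
      have := congrArg (fun z : ℤ_[p] => (z : ℚ_[p])) hk0
      push_cast at this
      exact this
    field_simp
    linear_combination hc
  have hy := coeff_le_one p k hmax 0 ((p : ℚ_[p]))⁻¹ hw
  rw [norm_inv, Padic.norm_p, inv_inv] at hy
  exact absurd hy (not_le.mpr (by exact_mod_cast (Fact.out : p.Prime).one_lt))

theorem not_max_of_one_mod_four (hp2 : p = 2)
    (hmax : (iota p k).range = (integralClosure ℤ_[p] (Kalg p k)).toSubring)
    (m : ℤ_[p]) (hk : k = 1 + 4 * m) : False := by
  have hk' : (k : ℚ_[p]) = 1 + 4 * (m : ℚ_[p]) := by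
    have := congrArg (fun z : ℤ_[p] => (z : ℚ_[p])) hk
    push_cast at this
    exact this
  have hw : IsIntegral ℤ_[p] (algebraMap ℚ_[p] (Kalg p k) (2 : ℚ_[p])⁻¹
      + algebraMap ℚ_[p] (Kalg p k) (2 : ℚ_[p])⁻¹ * AdjoinRoot.root _) := by
    refine ⟨X ^ 2 - X - C m, by monicity!, ?_⟩
    simp only [eval₂_sub, eval₂_pow, eval₂_X, eval₂_C]
    rw [tower_map]
    have key : (algebraMap ℚ_[p] (Kalg p k) (2 : ℚ_[p])⁻¹
          + algebraMap ℚ_[p] (Kalg p k) (2 : ℚ_[p])⁻¹ * AdjoinRoot.root (X ^ 2 - C (k : ℚ_[p]))) ^ 2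
          - (algebraMap ℚ_[p] (Kalg p k) (2 : ℚ_[p])⁻¹
          + algebraMap ℚ_[p] (Kalg p k) (2 : ℚ_[p])⁻¹ * AdjoinRoot.root (X ^ 2 - C (k : ℚ_[p])))
          - algebraMap ℚ_[p] (Kalg p k) (m : ℚ_[p])
        = algebraMap ℚ_[p] (Kalg p k) ((2 : ℚ_[p])⁻¹ * (2 : ℚ_[p])⁻¹)
            * (AdjoinRoot.root (X ^ 2 - C (k : ℚ_[p]))) ^ 2
          + algebraMap ℚ_[p] (Kalg p k)
              (2 * ((2 : ℚ_[p])⁻¹ * (2 : ℚ_[p])⁻¹) - (2 : ℚ_[p])⁻¹)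
            * AdjoinRoot.root (X ^ 2 - C (k : ℚ_[p]))
          + algebraMap ℚ_[p] (Kalg p k)
              ((2 : ℚ_[p])⁻¹ * (2 : ℚ_[p])⁻¹ - (2 : ℚ_[p])⁻¹ - (m : ℚ_[p])) := by
      simp only [map_sub, _root_.map_mul, map_add, map_ofNat]
      ring
    rw [key, root_sq,
      show (2 * ((2 : ℚ_[p])⁻¹ * (2 : ℚ_[p])⁻¹) - (2 : ℚ_[p])⁻¹) = 0 by norm_num,
      map_zero, zero_mul, add_zero, ← _root_.map_mul, ← map_add,
      show (2 : ℚ_[p])⁻¹ * (2 : ℚ_[p])⁻¹ * (k : ℚ_[p])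
        + ((2 : ℚ_[p])⁻¹ * (2 : ℚ_[p])⁻¹ - (2 : ℚ_[p])⁻¹ - (m : ℚ_[p])) = 0 from by
          rw [hk']; ring,
      map_zero]
  have hy := coeff_le_one p k hmax (2 : ℚ_[p])⁻¹ (2 : ℚ_[p])⁻¹ hw
  subst hp2
  have h2p : (2 : ℚ_[2]) = ((2 : ℕ) : ℚ_[2]) := by norm_num
  rw [norm_inv, h2p, Padic.norm_p, inv_inv] at hy
  norm_num at hy
theorem key_contra (hmax : (iota p k).range = (integralClosure ℤ_[p] (Kalg p k)).toSubring)
    (g : BCF ℤ_[p]) (hd : bcfDisc g = 4 * k)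
    (hc : (p : ℤ_[p]) ∣ g.2.2.1) (hdd : (p : ℤ_[p]) ^ 3 ∣ g.2.2.2) : False := by
  obtain ⟨a, b, c, d⟩ := g
  obtain ⟨c0, rfl⟩ := hc
  obtain ⟨d0, rfl⟩ := hdd
  have hm : 4 * k = (p : ℤ_[p]) ^ 2
      * ((p : ℤ_[p]) ^ 4 * a ^ 2 * d0 ^ 2 - 3 * b ^ 2 * c0 ^ 2
        - 6 * (p : ℤ_[p]) ^ 2 * a * b * c0 * d0 + 4 * (p : ℤ_[p]) * a * c0 ^ 3
        + 4 * (p : ℤ_[p]) * b ^ 3 * d0) := by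
    rw [← hd]; simp only [bcfDisc]; ring
  by_cases hp2 : p = 2
  · -- p = 2 : analyse k mod 8
    subst hp2
    have h4 : (4 : ℤ_[2]) ≠ 0 := by norm_num
    have hk8 : k = 16 * a ^ 2 * d0 ^ 2 - 3 * b ^ 2 * c0 ^ 2 - 24 * a * b * c0 * d0
        + 8 * a * c0 ^ 3 + 8 * b ^ 3 * d0 := by
      apply mul_left_cancel₀ h4
      rw [hm]
      push_cast
      ring
    set φ := PadicInt.toZModPow (p := 2) 3 with hφ
    have hφk : φ k = 16 * (φ a) ^ 2 * (φ d0) ^ 2 - 3 * (φ b) ^ 2 * (φ c0) ^ 2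
        - 24 * (φ a) * (φ b) * (φ c0) * (φ d0) + 8 * (φ a) * (φ c0) ^ 3
        + 8 * (φ b) ^ 3 * (φ d0) := by
      rw [hk8]
      simp only [map_sub, map_add, _root_.map_mul, map_pow, map_ofNat]
    have hsimp : φ k = 5 * ((φ b) * (φ c0)) ^ 2 := by
      rw [hφk]
      have hz8 : ∀ x y z w : ZMod (2 ^ 3),
          16 * x ^ 2 * w ^ 2 - 3 * y ^ 2 * z ^ 2 - 24 * x * y * z * w + 8 * x * z ^ 3
            + 8 * y ^ 3 * w = 5 * (y * z) ^ 2 := by decide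
      exact hz8 (φ a) (φ b) (φ c0) (φ d0)
    have hval : 5 * ((φ b) * (φ c0)) ^ 2 = 0 ∨ 5 * ((φ b) * (φ c0)) ^ 2 = 4
        ∨ 5 * ((φ b) * (φ c0)) ^ 2 = 5 := by
      have : ∀ t : ZMod (2 ^ 3), 5 * t ^ 2 = 0 ∨ 5 * t ^ 2 = 4 ∨ 5 * t ^ 2 = 5 := by decide
      exact this _
    set ψ := PadicInt.toZModPow (p := 2) 2 with hψ
    have hcomp : ∀ z : ℤ_[2], ψ z = ZMod.castHom (pow_dvd_pow 2 (by norm_num : 2 ≤ 3))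
        (ZMod (2 ^ 2)) (φ z) := by
      intro z
      have := PadicInt.zmod_cast_comp_toZModPow (p := 2) 2 3 (by norm_num)
      rw [hψ, ← this]
      rfl
    have hψk01 : ψ k = 0 ∨ ψ k = 1 := by
      rw [hcomp]
      rcases hval with h | h | h <;> rw [hsimp, h] <;> [left; left; right] <;> decide
    rcases hψk01 with h | h
    · -- 4 ∣ k
      have hker : k ∈ RingHom.ker ψ := h
      rw [hψ, PadicInt.ker_toZModPow, Ideal.mem_span_singleton] at hker
      exact not_max_of_sq_dvd 2 k hmax hker
    · -- k ≡ 1 mod 4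
      have hker : k - 1 ∈ RingHom.ker ψ := by
        rw [RingHom.mem_ker, map_sub, h, _root_.map_one, sub_self]
      rw [hψ, PadicInt.ker_toZModPow, Ideal.mem_span_singleton] at hker
      obtain ⟨m, hmm⟩ := hker
      refine not_max_of_one_mod_four 2 k rfl hmax m ?_
      have : ((2 : ℕ) : ℤ_[2]) ^ 2 = 4 := by push_cast; norm_num
      rw [this] at hmm
      linear_combination hmm
  · -- p odd : 4 is a unit, so p² ∣ k
    have hlt : ¬ ‖((4 : ℤ) : ℤ_[p])‖ < 1 := by
      rw [PadicInt.norm_int_lt_one_iff_dvd]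
      intro hdvd
      have h1 : p ∣ 4 := by exact_mod_cast hdvd
      have h3 : p ∣ 2 ^ 2 := by norm_num; exact h1
      have h2 := (Fact.out : p.Prime).dvd_of_dvd_pow h3
      exact hp2 ((Nat.prime_dvd_prime_iff_eq (Fact.out : p.Prime) Nat.prime_two).mp h2)
    have hu : IsUnit (4 : ℤ_[p]) := by
      rw [PadicInt.isUnit_iff]
      have hle := PadicInt.norm_le_one ((4 : ℤ) : ℤ_[p])
      push_cast at hlt hle ⊢
      exact le_antisymm hle (not_lt.mp hlt)
    have hdvd4 : (p : ℤ_[p]) ^ 2 ∣ 4 * k := ⟨_, hm⟩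
    have hdvdk : (p : ℤ_[p]) ^ 2 ∣ k := (hu.dvd_mul_left).mp hdvd4
    exact not_max_of_sq_dvd p k hmax hdvdk
theorem rational_equiv_implies_integral_equiv (hk : k ≠ 0)
    (hinj : Function.Injective (iota p k))
    (hmax : (iota p k).range = (integralClosure ℤ_[p] (Kalg p k)).toSubring)
    (f f' : BCF ℤ_[p]) (hf : bcfDisc f = 4 * k) (hf' : bcfDisc f' = 4 * k)
    (γ : Matrix.SpecialLinearGroup (Fin 2) ℚ_[p])
    (hγ : bcfAct (γ : Matrix (Fin 2) (Fin 2) ℚ_[p]) (mapC p f) = mapC p f') :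
    ∃ γ' : Matrix.SpecialLinearGroup (Fin 2) ℤ_[p],
      bcfAct (γ' : Matrix (Fin 2) (Fin 2) ℤ_[p]) f = f' := by
  obtain ⟨A, B, s, hA, hB, hs0, hABD⟩ :=
    dec_all p (γ : Matrix (Fin 2) (Fin 2) ℚ_[p]) γ.2
  set D : Matrix (Fin 2) (Fin 2) ℚ_[p] :=
    Matrix.diagonal ![((s : ℚ_[p]))⁻¹, (s : ℚ_[p])] with hD
  set g : BCF ℤ_[p] := bcfAct A f with hg
  set g' : BCF ℤ_[p] := bcfAct B.adjugate f' with hg'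
  have card2 : Fintype.card (Fin 2) = 2 := by simp
  -- step 1 : mapC g' = D · (mapC g)
  have h1 : bcfAct (A.map PadicInt.Coe.ringHom * D * B.map PadicInt.Coe.ringHom)
      (mapC p f) = mapC p f' := by rw [hABD]; exact hγ
  rw [bcfAct_mul, bcfAct_mul, ← mapC_act] at h1
  have h2 : mapC p g' = bcfAct D (mapC p g) := by
    rw [hg', mapC_act, ← h1, ← bcfAct_mul, ← Matrix.map_mul, Matrix.mul_adjugate, hB,
      one_smul, Matrix.map_one _ (map_zero _) (map_one _), bcfAct_one]
  -- entries of the diagonal matrix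
  have hD00 : D 0 0 = ((s : ℚ_[p]))⁻¹ := by simp [hD]
  have hD01 : D 0 1 = 0 := by simp [hD]
  have hD10 : D 1 0 = 0 := by simp [hD]
  have hD11 : D 1 1 = (s : ℚ_[p]) := by simp [hD]
  have h3 : mapC p g' = ((g.1 : ℚ_[p]) * (((s : ℚ_[p]))⁻¹) ^ 3,
      (g.2.1 : ℚ_[p]) * (((s : ℚ_[p]))⁻¹) ^ 2 * (s : ℚ_[p]),
      (g.2.2.1 : ℚ_[p]) * ((s : ℚ_[p]))⁻¹ * (s : ℚ_[p]) ^ 2,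
      (g.2.2.2 : ℚ_[p]) * (s : ℚ_[p]) ^ 3) := by
    rw [h2]
    simp only [bcfAct, hD00, hD01, hD10, hD11, mapC, Prod.mk.injEq]
    refine ⟨by ring, by ring, by ring, by ring⟩
  have hsq : (s : ℚ_[p]) ≠ 0 := fun h => hs0 (PadicInt.coe_eq_zero.mp h)
  have hcq : (g'.2.2.1 : ℚ_[p]) = (g.2.2.1 : ℚ_[p]) * (s : ℚ_[p]) := by
    have hcc := congrArg (fun z : BCF ℚ_[p] => z.2.2.1) h3
    simp only [mapC] at hcc
    rw [hcc]
    field_simp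
  have hdq : (g'.2.2.2 : ℚ_[p]) = (g.2.2.2 : ℚ_[p]) * (s : ℚ_[p]) ^ 3 := by
    have hdd := congrArg (fun z : BCF ℚ_[p] => z.2.2.2) h3
    simp only [mapC] at hdd
    exact hdd
  have hc : g'.2.2.1 = g.2.2.1 * s := Subtype.coe_injective (by push_cast; exact hcq)
  have hdcoord : g'.2.2.2 = g.2.2.2 * s ^ 3 := Subtype.coe_injective (by push_cast; exact hdq)
  by_cases hu : IsUnit s
  · -- s is a unit : γ comes from an integral matrix
    obtain ⟨u, hu'⟩ := hu
    set v : ℤ_[p] := ((u⁻¹ : ℤ_[p]ˣ) : ℤ_[p]) with hv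
    have hvs : v * s = 1 := by rw [← hu', hv]; exact_mod_cast u.inv_mul
    have hvsq : (v : ℚ_[p]) * (s : ℚ_[p]) = 1 := by exact_mod_cast congrArg _ hvs
    have hDz : (Matrix.diagonal ![v, s]).map PadicInt.Coe.ringHom = D := by
      ext i j
      fin_cases i <;> fin_cases j <;>
        simp [Matrix.diagonal, coeRH_eq, hD]
      exact eq_inv_of_mul_eq_one_left hvsq
    have hdetDz : (Matrix.diagonal ![v, s]).det = 1 := by
      rw [Matrix.det_diagonal]
      simpa [Fin.prod_univ_two] using hvs
    refine ⟨⟨A * Matrix.diagonal ![v, s] * B, by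
      rw [Matrix.det_mul, Matrix.det_mul, hA, hdetDz, hB]; ring⟩, ?_⟩
    apply mapC_inj p
    have hcoe : ((⟨A * Matrix.diagonal ![v, s] * B, by
        rw [Matrix.det_mul, Matrix.det_mul, hA, hdetDz, hB]; ring⟩ :
          Matrix.SpecialLinearGroup (Fin 2) ℤ_[p]) : Matrix (Fin 2) (Fin 2) ℤ_[p])
        = A * Matrix.diagonal ![v, s] * B := rfl
    rw [hcoe, mapC_act]
    have hmap : (A * Matrix.diagonal ![v, s] * B).map PadicInt.Coe.ringHom
        = (γ : Matrix (Fin 2) (Fin 2) ℚ_[p]) := by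
      rw [Matrix.map_mul, Matrix.map_mul, hDz, hABD]
    rw [hmap]
    exact hγ
  · -- s is not a unit : contradiction with maximality
    exfalso
    have hps : (p : ℤ_[p]) ∣ s := (PadicInt.norm_lt_one_iff_dvd s).mp
      (PadicInt.not_isUnit_iff.mp hu)
    have hdisc : bcfDisc g' = 4 * k := by
      rw [hg', bcfDisc_act_sl _ ?_ f', hf']
      rw [Matrix.det_adjugate, hB, card2]
      norm_num
    refine key_contra p k hmax g' hdisc ?_ ?_
    · rw [hc]; exact Dvd.dvd.mul_left hps _
    · rw [hdcoord]; exact Dvd.dvd.mul_left (pow_dvd_pow_of_dvd hps 3) _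

end
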